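/- arXiv:1103.2160 — 2 statements merged into one kernel-verified Lean document; each statement's English description precedes it below -/
import Mathlib

section
/- Let G be a group, let A be a commutative ring equipped with an action of G by ring automorphisms, and let M be an A-module equipped with an action of G by additive automorphisms satisfying the compatibility g • (x • m) = (g • x) • (g • m) for all g ∈ G, x ∈ A, m ∈ M. Suppose b : G → M is an A-basis of M and a : G → A is a function such that g • b(1) = a(g) • b(g) for every g ∈ G (where 1 is the identity of G). Then a(g) is a unit of A for every g ∈ G. -/
/-- In a `G`-equivariant `A`-module with `A`-basis `b` indexed by `G` satisfying
`g • b 1 = a g • b g`, each coefficient `a g` is a unit of `A`. -/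
theorem stmt_3 (G : Type*) [Group G] (A : Type*) [CommRing A] [MulSemiringAction G A]
    (M : Type*) [AddCommGroup M] [Module A M] [DistribMulAction G M]
    (compat : ∀ (g : G) (x : A) (m : M), g • (x • m) = (g • x) • (g • m))
    (b : Module.Basis G A M) (a : G → A)
    (hb : ∀ g : G, g • b (1 : G) = a g • b g) :
    ∀ g : G, IsUnit (a g) := by
  intro g
  have key : b (1 : G) = (g⁻¹ • a g) • (g⁻¹ • b g) := by
    have := congrArg (fun m => g⁻¹ • m) (hb g)
    simpa [compat] using this
  have h1 : (1 : A) = (g⁻¹ • a g) * (b.repr (g⁻¹ • b g)) 1 := by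
    have := congrArg (fun m => (b.repr m) 1) key
    simpa using this
  have hu : IsUnit (g⁻¹ • a g) := IsUnit.of_mul_eq_one _ h1.symm
  have := hu.map (MulSemiringAction.toRingHom G A g)
  simpa [MulSemiringAction.toRingHom_apply] using this
end

section
/- Let G be a group, let A be a commutative ring equipped with an action of G by ring automorphisms, and let M be an A-module equipped with an action of G by additive automorphisms satisfying g • (x • m) = (g • x) • (g • m) for all g ∈ G, x ∈ A, m ∈ M. Suppose M admits an A-basis b : G → M indexed by G together with a function a : G → A such that g • b(1) = a(g) • b(g) for every g ∈ G. Then M admits an A-basis c : G → M satisfying g • c(h) = c(g·h) for all g, h ∈ G; consequently the A-linear isomorphism (G →₀ A) → M determined by sending the standard basis vector at h to c(h) intertwines the G-action on finitely supported functions G →₀ A given by (g • f)(h) = g • (f(g⁻¹·h)) with the G-action on M. -/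
/-- In a `G`-equivariant `A`-module with an `A`-basis `b` indexed by `G` satisfying
`g • b 1 = a g • b g`, there is an `A`-basis `c` with `g • c h = c (g * h)`; moreover the
`A`-linear isomorphism `(G →₀ A) ≃ M` sending the standard basis vector at `h` to `c h`
intertwines the action `(g • f) h = g • f (g⁻¹ * h)` on `G →₀ A` with the action on `M`. -/
theorem stmt_4 (G : Type*) [Group G] (A : Type*) [CommRing A] [MulSemiringAction G A]
    (M : Type*) [AddCommGroup M] [Module A M] [DistribMulAction G M]
    (compat : ∀ (g : G) (x : A) (m : M), g • (x • m) = (g • x) • (g • m))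
    (b : Module.Basis G A M) (a : G → A)
    (hb : ∀ g : G, g • b (1 : G) = a g • b g) :
    ∃ c : Module.Basis G A M,
      (∀ g h : G, g • c h = c (g * h)) ∧
      (∀ (g : G) (f : G →₀ A),
        c.repr.symm
            (Finsupp.mapDomain (fun h : G => g * h)
              (f.mapRange (fun x : A => g • x) (smul_zero g))) =
          g • c.repr.symm f) := by
  have hunit : ∀ g : G, ∃ u : A, a g * u = 1 := by
    intro g
    have h1 : b (1 : G) = (g⁻¹ • a g) • (g⁻¹ • b g) := by
      have h2 := congrArg (fun m => g⁻¹ • m) (hb g)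
      simpa [inv_smul_smul, compat] using h2
    have h3 := congrArg (fun v => b.repr v 1) h1
    simp only [Module.Basis.repr_self, Finsupp.single_eq_same, map_smul, Finsupp.smul_apply,
      smul_eq_mul] at h3
    refine ⟨g • (b.repr (g⁻¹ • b g) 1), ?_⟩
    calc a g * g • (b.repr (g⁻¹ • b g) 1)
        = g • ((g⁻¹ • a g) * (b.repr (g⁻¹ • b g) 1)) := by
          rw [smul_mul', smul_inv_smul]
      _ = 1 := by rw [← h3, smul_one]
  choose u hu using hunit
  set w : G → Aˣ := fun g => ⟨a g, u g, hu g, by rw [mul_comm]; exact hu g⟩ with hw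
  set c : Module.Basis G A M := b.unitsSMul w with hcdef
  have hc : ∀ h : G, c h = h • b (1 : G) := by
    intro h
    rw [hcdef, Module.Basis.unitsSMul_apply, hb h]
    rfl
  have hequiv : ∀ g h : G, g • c h = c (g * h) := by
    intro g h
    rw [hc, hc, smul_smul]
  refine ⟨c, hequiv, ?_⟩
  intro g f
  induction f using Finsupp.induction_linear with
  | zero => simp
  | add f₁ f₂ ih1 ih2 =>
      rw [Finsupp.mapRange_add (smul_add g), Finsupp.mapDomain_add, map_add, ih1, ih2,
        map_add, smul_add]
  | single h x =>
      rw [Finsupp.mapRange_single, Finsupp.mapDomain_single, Module.Basis.repr_symm_single,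
        Module.Basis.repr_symm_single, compat, hequiv]
end
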